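/- If x1 and x2 are symmetric probability measures on the extended reals, then x1 ⊠ x2 is again a symmetric probability measure on the extended reals. -/

import Mathlib

open MeasureTheory Real Filter Topology Polynomial

noncomputable section

/-- The space of finite signed Borel measures on the extended reals `ℝ̄`. -/
abbrev SM := MeasureTheory.SignedMeasure EReal

namespace SCLDPC

/-- The weight `e^{-α/2}` as an extended nonnegative real (`+∞` at `α = -∞`). -/
def wt (α : EReal) : ENNReal :=
  if α = ⊥ then ⊤ else if α = ⊤ then 0 else ENNReal.ofReal (Real.exp (-(α.toReal) / 2))

/-- A (nonnegative) Borel measure `μ` on `ℝ̄` is symmetric if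
`∫_{-E} e^{-α/2} μ(dα) = ∫_{E} e^{-α/2} μ(dα)` for every Borel set `E`
(stated with extended nonnegative integrals, which is equivalent to requiring
equality whenever one of the two sides is finite). -/
def IsSymmMeasure (μ : Measure EReal) : Prop :=
  ∀ E : Set EReal, MeasurableSet E →
    ∫⁻ α in (fun a : EReal => -a) ⁻¹' E, wt α ∂μ = ∫⁻ α in E, wt α ∂μ

/-- Positive part of the Jordan decomposition. -/
def jp (x : SM) : Measure EReal := x.toJordanDecomposition.posPart

/-- Negative part of the Jordan decomposition. -/
def jn (x : SM) : Measure EReal := x.toJordanDecomposition.negPart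

instance (x : SM) : IsFiniteMeasure (jp x) := x.toJordanDecomposition.posPart_finite

instance (x : SM) : IsFiniteMeasure (jn x) := x.toJordanDecomposition.negPart_finite

/-- A finite signed Borel measure on `ℝ̄` is symmetric iff both parts of its Jordan
decomposition are symmetric measures. -/
def IsSymm (x : SM) : Prop := IsSymmMeasure (jp x) ∧ IsSymmMeasure (jn x)

/-- Membership in `X`, the set of symmetric probability measures on `ℝ̄`. -/
def MemX (x : SM) : Prop :=
  (∃ (μ : Measure EReal) (hμ : IsProbabilityMeasure μ),
      x = (letI := hμ; μ.toSignedMeasure)) ∧ IsSymm x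

/-- Membership in `X_d`, the set of differences of symmetric probability measures. -/
def MemXd (y : SM) : Prop := ∃ x1 x2 : SM, MemX x1 ∧ MemX x2 ∧ y = x1 - x2

/-- Integral of a real function against a finite signed measure. -/
def sInt (f : EReal → ℝ) (x : SM) : ℝ := (∫ α, f α ∂(jp x)) - ∫ α, f α ∂(jn x)

/-- `tanh(α/2)` extended continuously to `ℝ̄`. -/
def tanhHalf (α : EReal) : ℝ :=
  if α = ⊤ then 1 else if α = ⊥ then -1 else Real.tanh (α.toReal / 2)

/-- The inverse hyperbolic tangent on `(-1, 1)`. -/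
def artanh (t : ℝ) : ℝ := Real.log ((1 + t) / (1 - t)) / 2

/-- `2 tanh⁻¹(t)` valued in `ℝ̄` (sending `t ≥ 1` to `+∞` and `t ≤ -1` to `-∞`). -/
def atanhTwo (t : ℝ) : EReal :=
  if 1 ≤ t then ⊤ else if t ≤ -1 then ⊥ else ((2 * artanh t : ℝ) : EReal)

/-- Variable-node convolution `⊛` of two (nonnegative) measures:
`(μ ⊛ ν)(E) = ∫ μ(E - α) ν(dα)`, i.e. the pushforward of `μ × ν` under addition. -/
def mConv (μ ν : Measure EReal) : Measure EReal :=
  (μ.prod ν).map fun p => p.1 + p.2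

/-- Check-node convolution `⊠` of two (nonnegative) measures:
`(μ ⊠ ν)(E) = ∫ μ(2 tanh⁻¹(tanh(E/2) / tanh(α/2))) ν(dα)`, where the argument of `μ`
is the image of `E` under `β ↦ 2 tanh⁻¹(tanh(β/2) / tanh(α/2))`; equivalently, the
pushforward of `μ × ν` under `(β, α) ↦ 2 tanh⁻¹(tanh(β/2) · tanh(α/2))`. -/
def mCheck (μ ν : Measure EReal) : Measure EReal :=
  (μ.prod ν).map fun p => atanhTwo (tanhHalf p.1 * tanhHalf p.2)

instance (μ ν : Measure EReal) [IsFiniteMeasure μ] [IsFiniteMeasure ν] :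
    IsFiniteMeasure (mConv μ ν) := by unfold mConv; infer_instance

instance (μ ν : Measure EReal) [IsFiniteMeasure μ] [IsFiniteMeasure ν] :
    IsFiniteMeasure (mCheck μ ν) := by unfold mCheck; infer_instance

/-- The variable-node operation `⊛` extended bilinearly to finite signed measures. -/
def sConv (x y : SM) : SM :=
  (mConv (jp x) (jp y)).toSignedMeasure - (mConv (jp x) (jn y)).toSignedMeasure
    - (mConv (jn x) (jp y)).toSignedMeasure + (mConv (jn x) (jn y)).toSignedMeasure

/-- The check-node operation `⊠` extended bilinearly to finite signed measures. -/
def sCheck (x y : SM) : SM :=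
  (mCheck (jp x) (jp y)).toSignedMeasure - (mCheck (jp x) (jn y)).toSignedMeasure
    - (mCheck (jn x) (jp y)).toSignedMeasure + (mCheck (jn x) (jn y)).toSignedMeasure



open scoped ENNReal

section Aux

/-! ### auxiliary real lemmas -/

lemma tanh_lt_one' (u : ℝ) : Real.tanh u < 1 := by
  rw [Real.tanh_eq_sinh_div_cosh]
  rw [div_lt_one (Real.cosh_pos u)]
  nlinarith [Real.cosh_sub_sinh u, Real.exp_pos (-u)]

lemma neg_one_lt_tanh' (u : ℝ) : -1 < Real.tanh u := by
  rw [Real.tanh_eq_sinh_div_cosh, lt_div_iff₀ (Real.cosh_pos u)]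
  nlinarith [Real.cosh_add_sinh u, Real.exp_pos u]

lemma tanh_exp_form (u : ℝ) : Real.tanh u = (Real.exp u - Real.exp (-u)) / (Real.exp u + Real.exp (-u)) := by
  rw [Real.tanh_eq_sinh_div_cosh, Real.sinh_eq, Real.cosh_eq]
  rw [div_eq_div_iff (by positivity) (by positivity)]
  ring

lemma artanh_tanh (u : ℝ) : artanh (Real.tanh u) = u := by
  unfold artanh
  have h1 : 1 + Real.tanh u = Real.exp u / Real.cosh u := by
    rw [Real.tanh_eq_sinh_div_cosh, ← Real.cosh_add_sinh u]
    field_simp [(Real.cosh_pos u).ne']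
  have h2 : 1 - Real.tanh u = Real.exp (-u) / Real.cosh u := by
    rw [Real.tanh_eq_sinh_div_cosh, ← Real.cosh_sub_sinh u]
    field_simp [(Real.cosh_pos u).ne']
  rw [h1, h2]
  have h3 : Real.exp u / Real.cosh u / (Real.exp (-u) / Real.cosh u) = Real.exp u / Real.exp (-u) := by
    field_simp
  rw [h3, ← Real.exp_sub, Real.log_exp]
  ring

lemma artanh_neg (t : ℝ) : artanh (-t) = - artanh t := by
  unfold artanh
  have : (1 + -t) / (1 - -t) = ((1 + t) / (1 - t))⁻¹ := by
    rw [inv_div]; ring_nf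
  rw [this, Real.log_inv]; ring

lemma atanhTwo_neg (t : ℝ) : atanhTwo (-t) = - atanhTwo t := by
  unfold atanhTwo
  rcases le_or_gt 1 t with h | h
  · rw [if_neg (show ¬ (1:ℝ) ≤ -t by linarith), if_pos (show -t ≤ -1 by linarith),
      if_pos h, EReal.neg_top]
  rcases le_or_gt t (-1) with h' | h'
  · rw [if_pos (show (1:ℝ) ≤ -t by linarith), if_neg (show ¬ (1:ℝ) ≤ t by linarith),
      if_pos h', EReal.neg_bot]
  · rw [if_neg (show ¬ (1:ℝ) ≤ -t by linarith), if_neg (show ¬ -t ≤ -1 by linarith),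
      if_neg (show ¬ (1:ℝ) ≤ t by linarith), if_neg (show ¬ t ≤ -1 by linarith),
      artanh_neg, ← EReal.coe_neg]
    norm_num

lemma real_key (x y : ℝ) :
    (Real.exp (-x) + Real.exp (-y)) * (1 + Real.tanh (x/2) * Real.tanh (y/2))
      = (1 - Real.tanh (x/2) * Real.tanh (y/2)) * (1 + Real.exp (-x) * Real.exp (-y)) := by
  have hex : Real.exp (-x) = Real.exp (-(x/2)) * Real.exp (-(x/2)) := by
    rw [← Real.exp_add]; ring_nf
  have hey : Real.exp (-y) = Real.exp (-(y/2)) * Real.exp (-(y/2)) := by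
    rw [← Real.exp_add]; ring_nf
  have ht : Real.tanh (x/2) = (Real.exp (x/2) - Real.exp (-(x/2))) / (Real.exp (x/2) + Real.exp (-(x/2))) :=
    tanh_exp_form _
  have hs : Real.tanh (y/2) = (Real.exp (y/2) - Real.exp (-(y/2))) / (Real.exp (y/2) + Real.exp (-(y/2))) :=
    tanh_exp_form _
  have hxm : Real.exp (x/2) * Real.exp (-(x/2)) = 1 := by rw [← Real.exp_add]; simp
  have hym : Real.exp (y/2) * Real.exp (-(y/2)) = 1 := by rw [← Real.exp_add]; simp
  have e1 : Real.exp (-(x/2)) = (Real.exp (x/2))⁻¹ := Real.exp_neg _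
  have e2 : Real.exp (-(y/2)) = (Real.exp (y/2))⁻¹ := Real.exp_neg _
  rw [hex, hey, ht, hs, e1, e2]
  have h1 : Real.exp (x/2) ≠ 0 := (Real.exp_pos _).ne'
  have h2 : Real.exp (y/2) ≠ 0 := (Real.exp_pos _).ne'
  have h3 : Real.exp (x/2) + (Real.exp (x/2))⁻¹ ≠ 0 := by positivity
  have h4 : Real.exp (y/2) + (Real.exp (y/2))⁻¹ ≠ 0 := by positivity
  field_simp
  ring


def chk (β α : EReal) : EReal := atanhTwo (tanhHalf β * tanhHalf α)

/-! ### measurability -/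

lemma measurable_wt : Measurable wt := by
  unfold wt
  refine Measurable.ite (by simp [MeasurableSet.singleton]) measurable_const ?_
  · refine Measurable.ite (by simp [MeasurableSet.singleton]) measurable_const ?_
    exact ENNReal.measurable_ofReal.comp
      (Real.continuous_exp.measurable.comp ((measurable_ereal_toReal.neg).div_const 2))

lemma measurable_tanh : Measurable Real.tanh := by
  have : Continuous Real.tanh := by
    rw [show Real.tanh = fun x => Real.sinh x / Real.cosh x from funext Real.tanh_eq_sinh_div_cosh]
    exact Real.continuous_sinh.div Real.continuous_cosh fun x => (Real.cosh_pos x).ne'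
  exact this.measurable

lemma measurable_tanhHalf : Measurable tanhHalf := by
  unfold tanhHalf
  refine Measurable.ite (by simp [MeasurableSet.singleton]) measurable_const ?_
  refine Measurable.ite (by simp [MeasurableSet.singleton]) measurable_const ?_
  exact measurable_tanh.comp (measurable_ereal_toReal.div_const 2)

lemma measurable_artanh : Measurable artanh :=
  (Real.measurable_log.comp ((measurable_const.add measurable_id).div
    (measurable_const.sub measurable_id))).div_const 2

lemma measurable_atanhTwo : Measurable atanhTwo := by
  unfold atanhTwo
  refine Measurable.ite (measurableSet_le measurable_const measurable_id) measurable_const ?_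
  refine Measurable.ite (measurableSet_le measurable_id measurable_const) measurable_const ?_
  exact measurable_coe_real_ereal.comp (measurable_const.mul measurable_artanh)

lemma measurable_chk : Measurable (fun p : EReal × EReal => chk p.1 p.2) :=
  measurable_atanhTwo.comp ((measurable_tanhHalf.comp measurable_fst).mul
    (measurable_tanhHalf.comp measurable_snd))

/-! ### pointwise values -/

@[simp] lemma wt_bot : wt ⊥ = ⊤ := rfl
@[simp] lemma wt_top : wt ⊤ = 0 := by simp [wt]
@[simp] lemma wt_coe (x : ℝ) : wt (x : EReal) = ENNReal.ofReal (Real.exp (-x / 2)) := by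
  simp [wt]
@[simp] lemma tanhHalf_top : tanhHalf ⊤ = 1 := rfl
@[simp] lemma tanhHalf_bot : tanhHalf ⊥ = -1 := by simp [tanhHalf]
@[simp] lemma tanhHalf_coe (x : ℝ) : tanhHalf (x : EReal) = Real.tanh (x / 2) := by
  simp [tanhHalf]

lemma tanhHalf_neg (β : EReal) : tanhHalf (-β) = - tanhHalf β := by
  induction β using EReal.rec with
  | bot => simp [EReal.neg_bot]
  | top => simp [EReal.neg_top]
  | coe x =>
    rw [show (-(x:EReal)) = ((-x : ℝ) : EReal) from (EReal.coe_neg x).symm,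
      tanhHalf_coe, tanhHalf_coe, neg_div, Real.tanh_neg]

lemma tanhHalf_lt_one (x : ℝ) : tanhHalf (x:EReal) < 1 := by simp [tanh_lt_one']
lemma neg_one_lt_tanhHalf (x : ℝ) : -1 < tanhHalf (x:EReal) := by simp [neg_one_lt_tanh']

lemma atanhTwo_tanhHalf (β : EReal) : atanhTwo (tanhHalf β) = β := by
  induction β using EReal.rec with
  | bot => simp [atanhTwo]
  | top => simp [atanhTwo]
  | coe x =>
    rw [tanhHalf_coe, atanhTwo, if_neg (not_le.mpr (tanh_lt_one' _)),
      if_neg (not_le.mpr (neg_one_lt_tanh' _)), artanh_tanh]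
    exact congrArg Real.toEReal (by ring)

lemma chk_neg_left (β α : EReal) : chk (-β) α = - chk β α := by
  rw [chk, chk, tanhHalf_neg, neg_mul, atanhTwo_neg]

lemma chk_neg_right (β α : EReal) : chk β (-α) = - chk β α := by
  rw [chk, chk, tanhHalf_neg, mul_neg, atanhTwo_neg]

lemma chk_neg_neg (β α : EReal) : chk (-β) (-α) = chk β α := by
  rw [chk_neg_left, chk_neg_right, neg_neg]

@[simp] lemma chk_top_left (α : EReal) : chk ⊤ α = α := by
  rw [chk, tanhHalf_top, one_mul, atanhTwo_tanhHalf]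

@[simp] lemma chk_top_right (β : EReal) : chk β ⊤ = β := by
  rw [chk, tanhHalf_top, mul_one, atanhTwo_tanhHalf]

lemma abs_mul_lt_one {t s : ℝ} (ht1 : -1 < t) (ht2 : t < 1) (hs1 : -1 < s) (hs2 : s < 1) :
    -1 < t * s ∧ t * s < 1 := by
  constructor <;> nlinarith

lemma chk_coe_coe (x y : ℝ) :
    chk (x : EReal) (y : EReal)
      = ((2 * artanh (Real.tanh (x/2) * Real.tanh (y/2)) : ℝ) : EReal) := by
  obtain ⟨h1, h2⟩ := abs_mul_lt_one (neg_one_lt_tanh' (x/2)) (tanh_lt_one' (x/2))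
    (neg_one_lt_tanh' (y/2)) (tanh_lt_one' (y/2))
  rw [chk, tanhHalf_coe, tanhHalf_coe, atanhTwo, if_neg (not_le.mpr h2), if_neg (not_le.mpr h1)]


lemma chk_bot_left (α : EReal) : chk ⊥ α = -α := by
  rw [show (⊥:EReal) = -⊤ from EReal.neg_top.symm, chk_neg_left, chk_top_left]

lemma chk_bot_right (β : EReal) : chk β ⊥ = -β := by
  rw [show (⊥:EReal) = -⊤ from EReal.neg_top.symm, chk_neg_right, chk_top_right]

lemma wt_neg_coe (x : ℝ) : wt (-(x : EReal)) = ENNReal.ofReal (Real.exp (x / 2)) := by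
  rw [show (-(x:EReal)) = ((-x : ℝ) : EReal) from (EReal.coe_neg x).symm, wt_coe]
  norm_num

lemma wt_coe_pos (x : ℝ) : wt (x : EReal) ≠ 0 := by
  rw [wt_coe]
  simp [Real.exp_pos]

lemma wt_coe_lt_top (x : ℝ) : wt (x : EReal) ≠ ⊤ := by
  rw [wt_coe]; exact ENNReal.ofReal_ne_top

lemma wt_sq_coe (x : ℝ) : wt (x : EReal) * wt (x : EReal) = ENNReal.ofReal (Real.exp (-x)) := by
  rw [wt_coe, ← ENNReal.ofReal_mul (Real.exp_nonneg _), ← Real.exp_add]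
  congr 1
  ring_nf

lemma wt_neg_mul_wt (z : EReal) :
    wt (-z) * wt z = if z = ⊥ ∨ z = ⊤ then 0 else 1 := by
  induction z using EReal.rec with
  | bot => rw [EReal.neg_bot, wt_top, wt_bot]; simp
  | top => rw [EReal.neg_top, wt_bot, wt_top]; simp
  | coe x =>
    rw [wt_neg_coe, wt_coe, ← ENNReal.ofReal_mul (Real.exp_nonneg _), ← Real.exp_add,
      if_neg (by simp), show x / 2 + -x / 2 = 0 by ring]
    simp

lemma exp_neg_two_artanh {r : ℝ} (h1 : -1 < r) (h2 : r < 1) :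
    Real.exp (-(2 * artanh r)) = (1 - r) / (1 + r) := by
  unfold artanh
  rw [show -(2 * (Real.log ((1 + r) / (1 - r)) / 2)) = -Real.log ((1 + r) / (1 - r)) by ring,
    Real.exp_neg, Real.exp_log (div_pos (by linarith) (by linarith)), inv_div]

lemma key_id (β α : EReal) (h : ¬(β = ⊥ ∧ α = ⊥)) :
    wt β * wt β + wt α * wt α
      = (wt (chk β α) * wt (chk β α)) * (1 + (wt β * wt β) * (wt α * wt α)) := by
  induction β using EReal.rec with
  | bot =>
    induction α using EReal.rec with
    | bot => exact absurd ⟨rfl, rfl⟩ h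
    | top =>
      rw [chk_bot_left, EReal.neg_top, wt_bot, wt_top]
      simp
    | coe y =>
      rw [chk_bot_left, wt_bot, wt_neg_coe, wt_sq_coe]
      rw [← ENNReal.ofReal_mul (Real.exp_nonneg _), ← Real.exp_add]
      have h0 : ENNReal.ofReal (Real.exp (-y)) ≠ 0 := by simp [Real.exp_pos]
      have h1 : ENNReal.ofReal (Real.exp (y/2 + y/2)) ≠ 0 := by simp [Real.exp_pos]
      simp [ENNReal.top_mul h0, ENNReal.mul_top h1, h0, h1, ENNReal.mul_top, Real.exp_pos,
        not_le.mpr (Real.exp_pos _)]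
  | top =>
    induction α using EReal.rec with
    | bot =>
      rw [chk_bot_right, EReal.neg_top, wt_bot, wt_top]
      simp
    | top =>
      rw [chk_top_left, wt_top]
      simp
    | coe y =>
      rw [chk_top_left, wt_top]
      simp
  | coe x =>
    induction α using EReal.rec with
    | bot =>
      rw [chk_bot_right, wt_bot, wt_neg_coe, wt_sq_coe]
      rw [← ENNReal.ofReal_mul (Real.exp_nonneg _), ← Real.exp_add]
      have h0 : ENNReal.ofReal (Real.exp (-x)) ≠ 0 := by simp [Real.exp_pos]
      have h1 : ENNReal.ofReal (Real.exp (x/2 + x/2)) ≠ 0 := by simp [Real.exp_pos]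
      simp [ENNReal.top_mul h0, ENNReal.mul_top h1, h0, h1, ENNReal.mul_top, Real.exp_pos,
        not_le.mpr (Real.exp_pos _)]
    | top =>
      rw [chk_top_right, wt_top]
      simp
    | coe y =>
      have hb1 := neg_one_lt_tanh' (x/2); have hb2 := tanh_lt_one' (x/2)
      have hb3 := neg_one_lt_tanh' (y/2); have hb4 := tanh_lt_one' (y/2)
      set r := Real.tanh (x/2) * Real.tanh (y/2) with hr
      have hr1 : -1 < r := by nlinarith
      have hr2 : r < 1 := by nlinarith
      have hz : wt (chk (x:EReal) (y:EReal)) * wt (chk (x:EReal) (y:EReal))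
          = ENNReal.ofReal ((1 - r) / (1 + r)) := by
        rw [chk_coe_coe, wt_sq_coe, ← hr, exp_neg_two_artanh hr1 hr2]
      rw [hz, wt_sq_coe, wt_sq_coe]
      rw [← ENNReal.ofReal_one, ← ENNReal.ofReal_mul (Real.exp_nonneg _),
        ← ENNReal.ofReal_add (Real.exp_nonneg _) (Real.exp_nonneg _),
        ← ENNReal.ofReal_add (by norm_num) (by positivity),
        ← ENNReal.ofReal_mul (div_nonneg (by linarith) (by linarith))]
      congr 1
      have hd : 0 < 1 + r := by linarith
      rw [div_mul_eq_mul_div, eq_div_iff hd.ne']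
      have := real_key x y
      rw [← hr] at this
      linarith [this]
  

lemma measurable_neg_ereal : Measurable (fun a : EReal => -a) := continuous_neg.measurable

lemma symm_lintegral {μ : Measure EReal} (hμ : IsSymmMeasure μ) {g : EReal → ℝ≥0∞}
    (hg : Measurable g) : ∫⁻ β, g (-β) * wt β ∂μ = ∫⁻ β, g β * wt β ∂μ := by
  have hmap : (μ.withDensity wt).map (fun a : EReal => -a) = μ.withDensity wt := by
    ext E hE
    rw [Measure.map_apply measurable_neg_ereal hE, withDensity_apply _ (measurable_neg_ereal hE),
      withDensity_apply _ hE]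
    exact hμ E hE
  have h1 : ∀ {k : EReal → ℝ≥0∞}, Measurable k →
      ∫⁻ β, k β ∂(μ.withDensity wt) = ∫⁻ β, k β * wt β ∂μ := by
    intro k hk
    rw [lintegral_withDensity_eq_lintegral_mul μ measurable_wt hk]
    exact lintegral_congr fun β => mul_comm _ _
  calc ∫⁻ β, g (-β) * wt β ∂μ = ∫⁻ β, g (-β) ∂(μ.withDensity wt) :=
        (h1 (hg.comp measurable_neg_ereal)).symm
    _ = ∫⁻ β, g β ∂((μ.withDensity wt).map (fun a : EReal => -a)) :=
        (lintegral_map hg measurable_neg_ereal).symm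
    _ = ∫⁻ β, g β ∂(μ.withDensity wt) := by rw [hmap]
    _ = ∫⁻ β, g β * wt β ∂μ := h1 hg

lemma bot_null {μ : Measure EReal} (hμ : IsSymmMeasure μ) : μ {⊥} = 0 := by
  have h := hμ {⊥} (measurableSet_singleton _)
  have hpre : (fun a : EReal => -a) ⁻¹' {⊥} = {⊤} := by
    ext a; simp [EReal.neg_eq_bot_iff]
  rw [hpre, lintegral_singleton, lintegral_singleton, wt_top, wt_bot, zero_mul] at h
  by_contra hne
  rw [ENNReal.top_mul hne] at h
  exact absurd h.symm (by simp)

variable {μ1 μ2 : Measure EReal} [IsFiniteMeasure μ1] [IsFiniteMeasure μ2]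

lemma subA1 (hμ1 : IsSymmMeasure μ1) {k : EReal × EReal → ℝ≥0∞} (hk : Measurable k) :
    ∫⁻ p, k (-p.1, p.2) * (wt (-p.1) * wt p.1) ∂(μ1.prod μ2)
      = ∫⁻ p, k p * (wt p.1 * wt p.1) ∂(μ1.prod μ2) := by
  have m1 : Measurable fun p : EReal × EReal => k (-p.1, p.2) * (wt (-p.1) * wt p.1) :=
    (hk.comp ((measurable_neg_ereal.comp measurable_fst).prodMk measurable_snd)).mul
      ((measurable_wt.comp (measurable_neg_ereal.comp measurable_fst)).mul
        (measurable_wt.comp measurable_fst))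
  have m2 : Measurable fun p : EReal × EReal => k p * (wt p.1 * wt p.1) :=
    hk.mul ((measurable_wt.comp measurable_fst).mul (measurable_wt.comp measurable_fst))
  rw [lintegral_prod_symm _ m1.aemeasurable, lintegral_prod_symm _ m2.aemeasurable]
  refine lintegral_congr fun α => ?_
  have hg : Measurable fun β => k (β, α) * wt β :=
    (hk.comp (measurable_id.prodMk measurable_const)).mul measurable_wt
  calc ∫⁻ β, k (-β, α) * (wt (-β) * wt β) ∂μ1
      = ∫⁻ β, (k (-β, α) * wt (-β)) * wt β ∂μ1 := lintegral_congr fun β => by ring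
    _ = ∫⁻ β, (k (β, α) * wt β) * wt β ∂μ1 := symm_lintegral hμ1 hg
    _ = ∫⁻ β, k (β, α) * (wt β * wt β) ∂μ1 := lintegral_congr fun β => by ring

lemma subA2 (hμ2 : IsSymmMeasure μ2) {k : EReal × EReal → ℝ≥0∞} (hk : Measurable k) :
    ∫⁻ p, k (p.1, -p.2) * (wt (-p.2) * wt p.2) ∂(μ1.prod μ2)
      = ∫⁻ p, k p * (wt p.2 * wt p.2) ∂(μ1.prod μ2) := by
  have m1 : Measurable fun p : EReal × EReal => k (p.1, -p.2) * (wt (-p.2) * wt p.2) :=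
    (hk.comp (measurable_fst.prodMk (measurable_neg_ereal.comp measurable_snd))).mul
      ((measurable_wt.comp (measurable_neg_ereal.comp measurable_snd)).mul
        (measurable_wt.comp measurable_snd))
  have m2 : Measurable fun p : EReal × EReal => k p * (wt p.2 * wt p.2) :=
    hk.mul ((measurable_wt.comp measurable_snd).mul (measurable_wt.comp measurable_snd))
  rw [lintegral_prod _ m1.aemeasurable, lintegral_prod _ m2.aemeasurable]
  refine lintegral_congr fun β => ?_
  have hg : Measurable fun α => k (β, α) * wt α :=
    (hk.comp (measurable_const.prodMk measurable_id)).mul measurable_wt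
  calc ∫⁻ α, k (β, -α) * (wt (-α) * wt α) ∂μ2
      = ∫⁻ α, (k (β, -α) * wt (-α)) * wt α ∂μ2 := lintegral_congr fun α => by ring
    _ = ∫⁻ α, (k (β, α) * wt α) * wt α ∂μ2 := symm_lintegral hμ2 hg
    _ = ∫⁻ α, k (β, α) * (wt α * wt α) ∂μ2 := lintegral_congr fun α => by ring

lemma subA12 (hμ1 : IsSymmMeasure μ1) (hμ2 : IsSymmMeasure μ2)
    {k : EReal × EReal → ℝ≥0∞} (hk : Measurable k) :
    ∫⁻ p, k (-p.1, -p.2) * (wt (-p.1) * wt p.1) * (wt (-p.2) * wt p.2) ∂(μ1.prod μ2)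
      = ∫⁻ p, k p * (wt p.1 * wt p.1) * (wt p.2 * wt p.2) ∂(μ1.prod μ2) := by
  have hk1 : Measurable fun p : EReal × EReal => k (p.1, -p.2) * (wt (-p.2) * wt p.2) :=
    (hk.comp (measurable_fst.prodMk (measurable_neg_ereal.comp measurable_snd))).mul
      ((measurable_wt.comp (measurable_neg_ereal.comp measurable_snd)).mul
        (measurable_wt.comp measurable_snd))
  have hk2 : Measurable fun p : EReal × EReal => k p * (wt p.1 * wt p.1) :=
    hk.mul ((measurable_wt.comp measurable_fst).mul (measurable_wt.comp measurable_fst))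
  calc ∫⁻ p, k (-p.1, -p.2) * (wt (-p.1) * wt p.1) * (wt (-p.2) * wt p.2) ∂(μ1.prod μ2)
      = ∫⁻ p, (fun q : EReal × EReal => k (q.1, -q.2) * (wt (-q.2) * wt q.2)) (-p.1, p.2)
          * (wt (-p.1) * wt p.1) ∂(μ1.prod μ2) := lintegral_congr fun p => by simp only []; ring
    _ = ∫⁻ p, (k (p.1, -p.2) * (wt (-p.2) * wt p.2)) * (wt p.1 * wt p.1) ∂(μ1.prod μ2) :=
        subA1 hμ1 hk1
    _ = ∫⁻ p, (fun q : EReal × EReal => k q * (wt q.1 * wt q.1)) (p.1, -p.2)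
          * (wt (-p.2) * wt p.2) ∂(μ1.prod μ2) := lintegral_congr fun p => by simp only []; ring
    _ = ∫⁻ p, (k p * (wt p.1 * wt p.1)) * (wt p.2 * wt p.2) ∂(μ1.prod μ2) := subA2 hμ2 hk2
    _ = ∫⁻ p, k p * (wt p.1 * wt p.1) * (wt p.2 * wt p.2) ∂(μ1.prod μ2) :=
        lintegral_congr fun p => by ring


def tind (β : EReal) : ℝ≥0∞ := if β = ⊤ then 1 else 0

lemma measurable_tind : Measurable tind := by
  unfold tind
  exact Measurable.ite (by simp [MeasurableSet.singleton]) measurable_const measurable_const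

lemma lintegral_tind (μ : Measure EReal) : ∫⁻ β, tind β ∂μ = μ {⊤} := by
  rw [show tind = ({(⊤:EReal)} : Set EReal).indicator 1 from funext fun β => by
    simp [tind, Set.indicator_apply]]
  exact lintegral_indicator_one (measurableSet_singleton _)

lemma prodBotNull1 (hμ1 : IsSymmMeasure μ1) :
    (μ1.prod μ2) {p : EReal × EReal | p.1 = ⊥} = 0 := by
  have : {p : EReal × EReal | p.1 = ⊥} = ({(⊥:EReal)} : Set EReal) ×ˢ (Set.univ : Set EReal) := by
    ext ⟨a, b⟩
    simp [eq_comm]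
  rw [this, Measure.prod_prod, bot_null hμ1, zero_mul]

lemma prodBotNull2 (hμ2 : IsSymmMeasure μ2) :
    (μ1.prod μ2) {p : EReal × EReal | p.2 = ⊥} = 0 := by
  have : {p : EReal × EReal | p.2 = ⊥} = (Set.univ : Set EReal) ×ˢ ({(⊥:EReal)} : Set EReal) := by
    ext ⟨a, b⟩
    simp [eq_comm]
  rw [this, Measure.prod_prod, bot_null hμ2, mul_zero]

lemma aeNeBot (hμ1 : IsSymmMeasure μ1) (hμ2 : IsSymmMeasure μ2) :
    ∀ᵐ p ∂(μ1.prod μ2), p.1 ≠ ⊥ ∧ p.2 ≠ ⊥ := by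
  rw [MeasureTheory.ae_iff]
  refine measure_mono_null (fun p hp => ?_)
    (measure_union_null (prodBotNull1 hμ1) (prodBotNull2 hμ2))
  simp only [Set.mem_setOf_eq, not_and_or, not_ne_iff] at hp
  simpa using hp

lemma claimC (β α : EReal) (hβ : β ≠ ⊥) (hα : α ≠ ⊥) :
    wt (-(chk β α)) * wt (chk β α) * wt (chk β α)
        * (1 + (wt (-β) * wt β) * (wt (-α) * wt α))
      = wt (chk β α) * ((wt (-β) * wt β) + (wt (-α) * wt α)) := by
  induction β using EReal.rec with
  | bot => exact absurd rfl hβ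
  | top =>
    rw [chk_top_left, EReal.neg_top, wt_bot, wt_top]
    induction α using EReal.rec with
    | bot => exact absurd rfl hα
    | top => rw [EReal.neg_top, wt_bot, wt_top]; simp
    | coe y =>
      have h1 : wt (-(y:EReal)) * wt (y:EReal) = 1 := by rw [wt_neg_mul_wt]; simp
      rw [h1]; simp
  | coe x =>
    have h1 : wt (-(x:EReal)) * wt (x:EReal) = 1 := by rw [wt_neg_mul_wt]; simp
    induction α using EReal.rec with
    | bot => exact absurd rfl hα
    | top =>
      rw [chk_top_right, EReal.neg_top, wt_bot, wt_top, h1]; simp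
    | coe y =>
      have h2 : wt (-(y:EReal)) * wt (y:EReal) = 1 := by rw [wt_neg_mul_wt]; simp
      have hz : wt (-(chk (x:EReal) (y:EReal))) * wt (chk (x:EReal) (y:EReal)) = 1 := by
        rw [wt_neg_mul_wt, if_neg]
        rw [chk_coe_coe]
        exact not_or.mpr ⟨EReal.coe_ne_bot _, EReal.coe_ne_top _⟩
      rw [hz, h1, h2]
      simp

lemma ittOne (β : EReal) (hβ : β ≠ ⊥) : wt (-β) * wt β + tind β = 1 := by
  rw [wt_neg_mul_wt]
  induction β using EReal.rec with
  | bot => exact absurd rfl hβ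
  | top => simp [tind]
  | coe x => simp [tind]

lemma middle (hμ1 : IsSymmMeasure μ1) (hμ2 : IsSymmMeasure μ2)
    {h : EReal → ℝ≥0∞} (hh : Measurable h) :
    ∫⁻ p, h (-(chk p.1 p.2)) * wt (chk p.1 p.2)
        * ((wt (-p.1) * wt p.1) + (wt (-p.2) * wt p.2)) ∂(μ1.prod μ2)
      = ∫⁻ p, h (chk p.1 p.2) * wt (chk p.1 p.2)
        * ((wt (-p.1) * wt p.1) + (wt (-p.2) * wt p.2)) ∂(μ1.prod μ2) := by
  have mZ : Measurable (fun p : EReal × EReal => chk p.1 p.2) := measurable_chk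
  have mwZ : Measurable (fun p : EReal × EReal => wt (chk p.1 p.2)) := measurable_wt.comp mZ
  have mwnZ : Measurable (fun p : EReal × EReal => wt (-(chk p.1 p.2))) :=
    measurable_wt.comp (measurable_neg_ereal.comp mZ)
  have mhZ : Measurable (fun p : EReal × EReal => h (chk p.1 p.2)) := hh.comp mZ
  have mhnZ : Measurable (fun p : EReal × EReal => h (-(chk p.1 p.2))) :=
    (hh.comp measurable_neg_ereal).comp mZ
  have mu1 : Measurable (fun p : EReal × EReal => wt p.1) := measurable_wt.comp measurable_fst
  have mu2 : Measurable (fun p : EReal × EReal => wt p.2) := measurable_wt.comp measurable_snd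
  have mnu1 : Measurable (fun p : EReal × EReal => wt (-p.1)) :=
    measurable_wt.comp (measurable_neg_ereal.comp measurable_fst)
  have mnu2 : Measurable (fun p : EReal × EReal => wt (-p.2)) :=
    measurable_wt.comp (measurable_neg_ereal.comp measurable_snd)
  -- the H-trick
  have mH : Measurable (fun ζ : EReal => h ζ * wt (-ζ)) :=
    hh.mul (measurable_wt.comp measurable_neg_ereal)
  have E1 : ∫⁻ p, h (-(chk p.1 p.2)) * wt (chk p.1 p.2) * (wt (-p.1) * wt p.1) ∂(μ1.prod μ2)
      = ∫⁻ p, h (chk p.1 p.2) * wt (-(chk p.1 p.2)) * (wt p.1 * wt p.1) ∂(μ1.prod μ2) := by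
    calc ∫⁻ p, h (-(chk p.1 p.2)) * wt (chk p.1 p.2) * (wt (-p.1) * wt p.1) ∂(μ1.prod μ2)
        = ∫⁻ p, (fun q : EReal × EReal => h (chk q.1 q.2) * wt (-(chk q.1 q.2))) (-p.1, p.2)
            * (wt (-p.1) * wt p.1) ∂(μ1.prod μ2) := by
          refine lintegral_congr fun p => ?_
          simp only []
          rw [chk_neg_left, neg_neg]
          try ring
      _ = ∫⁻ p, h (chk p.1 p.2) * wt (-(chk p.1 p.2)) * (wt p.1 * wt p.1) ∂(μ1.prod μ2) :=
          subA1 hμ1 (mhZ.mul mwnZ)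
  have E2 : ∫⁻ p, h (-(chk p.1 p.2)) * wt (chk p.1 p.2) * (wt (-p.2) * wt p.2) ∂(μ1.prod μ2)
      = ∫⁻ p, h (chk p.1 p.2) * wt (-(chk p.1 p.2)) * (wt p.2 * wt p.2) ∂(μ1.prod μ2) := by
    calc ∫⁻ p, h (-(chk p.1 p.2)) * wt (chk p.1 p.2) * (wt (-p.2) * wt p.2) ∂(μ1.prod μ2)
        = ∫⁻ p, (fun q : EReal × EReal => h (chk q.1 q.2) * wt (-(chk q.1 q.2))) (p.1, -p.2)
            * (wt (-p.2) * wt p.2) ∂(μ1.prod μ2) := by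
          refine lintegral_congr fun p => ?_
          simp only []
          rw [chk_neg_right, neg_neg]
          try ring
      _ = ∫⁻ p, h (chk p.1 p.2) * wt (-(chk p.1 p.2)) * (wt p.2 * wt p.2) ∂(μ1.prod μ2) :=
          subA2 hμ2 (mhZ.mul mwnZ)
  have E12 : ∫⁻ p, h (chk p.1 p.2) * wt (-(chk p.1 p.2)) * (wt (chk p.1 p.2) * wt (chk p.1 p.2))
        * ((wt (-p.1) * wt p.1) * (wt (-p.2) * wt p.2)) ∂(μ1.prod μ2)
      = ∫⁻ p, h (chk p.1 p.2) * wt (-(chk p.1 p.2)) * (wt (chk p.1 p.2) * wt (chk p.1 p.2))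
        * ((wt p.1 * wt p.1) * (wt p.2 * wt p.2)) ∂(μ1.prod μ2) := by
    have mk : Measurable (fun q : EReal × EReal =>
        h (chk q.1 q.2) * wt (-(chk q.1 q.2)) * (wt (chk q.1 q.2) * wt (chk q.1 q.2))) :=
      (mhZ.mul mwnZ).mul (mwZ.mul mwZ)
    calc ∫⁻ p, h (chk p.1 p.2) * wt (-(chk p.1 p.2)) * (wt (chk p.1 p.2) * wt (chk p.1 p.2))
          * ((wt (-p.1) * wt p.1) * (wt (-p.2) * wt p.2)) ∂(μ1.prod μ2)
        = ∫⁻ p, (fun q : EReal × EReal => h (chk q.1 q.2) * wt (-(chk q.1 q.2))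
              * (wt (chk q.1 q.2) * wt (chk q.1 q.2))) (-p.1, -p.2)
            * (wt (-p.1) * wt p.1) * (wt (-p.2) * wt p.2) ∂(μ1.prod μ2) := by
          refine lintegral_congr fun p => ?_
          simp only []
          rw [chk_neg_neg]
          try ring
      _ = ∫⁻ p, (h (chk p.1 p.2) * wt (-(chk p.1 p.2)) * (wt (chk p.1 p.2) * wt (chk p.1 p.2)))
            * (wt p.1 * wt p.1) * (wt p.2 * wt p.2) ∂(μ1.prod μ2) := subA12 hμ1 hμ2 mk
      _ = _ := lintegral_congr fun p => by ring
  have hae := aeNeBot hμ1 hμ2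
  calc ∫⁻ p, h (-(chk p.1 p.2)) * wt (chk p.1 p.2)
        * ((wt (-p.1) * wt p.1) + (wt (-p.2) * wt p.2)) ∂(μ1.prod μ2)
      = ∫⁻ p, h (-(chk p.1 p.2)) * wt (chk p.1 p.2) * (wt (-p.1) * wt p.1)
          + h (-(chk p.1 p.2)) * wt (chk p.1 p.2) * (wt (-p.2) * wt p.2) ∂(μ1.prod μ2) :=
        lintegral_congr fun p => by ring
    _ = ∫⁻ p, h (-(chk p.1 p.2)) * wt (chk p.1 p.2) * (wt (-p.1) * wt p.1) ∂(μ1.prod μ2)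
          + ∫⁻ p, h (-(chk p.1 p.2)) * wt (chk p.1 p.2) * (wt (-p.2) * wt p.2) ∂(μ1.prod μ2) :=
        lintegral_add_left ((mhnZ.mul mwZ).mul (mnu1.mul mu1)) _
    _ = ∫⁻ p, h (chk p.1 p.2) * wt (-(chk p.1 p.2)) * (wt p.1 * wt p.1) ∂(μ1.prod μ2)
          + ∫⁻ p, h (chk p.1 p.2) * wt (-(chk p.1 p.2)) * (wt p.2 * wt p.2) ∂(μ1.prod μ2) := by
        rw [E1, E2]
    _ = ∫⁻ p, h (chk p.1 p.2) * wt (-(chk p.1 p.2)) * (wt p.1 * wt p.1)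
          + h (chk p.1 p.2) * wt (-(chk p.1 p.2)) * (wt p.2 * wt p.2) ∂(μ1.prod μ2) :=
        (lintegral_add_left ((mhZ.mul mwnZ).mul (mu1.mul mu1)) _).symm
    _ = ∫⁻ p, h (chk p.1 p.2) * wt (-(chk p.1 p.2))
          * ((wt p.1 * wt p.1) + (wt p.2 * wt p.2)) ∂(μ1.prod μ2) :=
        lintegral_congr fun p => by ring
    _ = ∫⁻ p, h (chk p.1 p.2) * wt (-(chk p.1 p.2))
          * ((wt (chk p.1 p.2) * wt (chk p.1 p.2))
            * (1 + (wt p.1 * wt p.1) * (wt p.2 * wt p.2))) ∂(μ1.prod μ2) := by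
        refine lintegral_congr_ae (hae.mono fun p hp => ?_)
        simp only []
        rw [key_id p.1 p.2 (by tauto)]
    _ = ∫⁻ p, h (chk p.1 p.2) * wt (-(chk p.1 p.2)) * (wt (chk p.1 p.2) * wt (chk p.1 p.2))
          + h (chk p.1 p.2) * wt (-(chk p.1 p.2)) * (wt (chk p.1 p.2) * wt (chk p.1 p.2))
            * ((wt p.1 * wt p.1) * (wt p.2 * wt p.2)) ∂(μ1.prod μ2) :=
        lintegral_congr fun p => by ring
    _ = ∫⁻ p, h (chk p.1 p.2) * wt (-(chk p.1 p.2)) * (wt (chk p.1 p.2) * wt (chk p.1 p.2)) ∂(μ1.prod μ2)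
          + ∫⁻ p, h (chk p.1 p.2) * wt (-(chk p.1 p.2)) * (wt (chk p.1 p.2) * wt (chk p.1 p.2))
            * ((wt p.1 * wt p.1) * (wt p.2 * wt p.2)) ∂(μ1.prod μ2) :=
        lintegral_add_left ((mhZ.mul mwnZ).mul (mwZ.mul mwZ)) _
    _ = ∫⁻ p, h (chk p.1 p.2) * wt (-(chk p.1 p.2)) * (wt (chk p.1 p.2) * wt (chk p.1 p.2)) ∂(μ1.prod μ2)
          + ∫⁻ p, h (chk p.1 p.2) * wt (-(chk p.1 p.2)) * (wt (chk p.1 p.2) * wt (chk p.1 p.2))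
            * ((wt (-p.1) * wt p.1) * (wt (-p.2) * wt p.2)) ∂(μ1.prod μ2) := by rw [E12]
    _ = ∫⁻ p, h (chk p.1 p.2) * wt (-(chk p.1 p.2)) * (wt (chk p.1 p.2) * wt (chk p.1 p.2))
          + h (chk p.1 p.2) * wt (-(chk p.1 p.2)) * (wt (chk p.1 p.2) * wt (chk p.1 p.2))
            * ((wt (-p.1) * wt p.1) * (wt (-p.2) * wt p.2)) ∂(μ1.prod μ2) :=
        (lintegral_add_left ((mhZ.mul mwnZ).mul (mwZ.mul mwZ)) _).symm
    _ = ∫⁻ p, h (chk p.1 p.2)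
          * (wt (-(chk p.1 p.2)) * wt (chk p.1 p.2) * wt (chk p.1 p.2)
            * (1 + (wt (-p.1) * wt p.1) * (wt (-p.2) * wt p.2))) ∂(μ1.prod μ2) :=
        lintegral_congr fun p => by ring
    _ = ∫⁻ p, h (chk p.1 p.2)
          * (wt (chk p.1 p.2) * ((wt (-p.1) * wt p.1) + (wt (-p.2) * wt p.2))) ∂(μ1.prod μ2) := by
        refine lintegral_congr_ae (hae.mono fun p hp => ?_)
        simp only []
        rw [claimC p.1 p.2 hp.1 hp.2]
    _ = ∫⁻ p, h (chk p.1 p.2) * wt (chk p.1 p.2)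
          * ((wt (-p.1) * wt p.1) + (wt (-p.2) * wt p.2)) ∂(μ1.prod μ2) :=
        lintegral_congr fun p => by ring


lemma atom1 (hμ2 : IsSymmMeasure μ2) {h : EReal → ℝ≥0∞} (hh : Measurable h) :
    ∫⁻ p, h (-(chk p.1 p.2)) * wt (chk p.1 p.2) * tind p.1 ∂(μ1.prod μ2)
      = ∫⁻ p, h (chk p.1 p.2) * wt (chk p.1 p.2) * tind p.1 ∂(μ1.prod μ2) := by
  have e : ∀ (h' : EReal → ℝ≥0∞) (p : EReal × EReal),
      h' (chk p.1 p.2) * wt (chk p.1 p.2) * tind p.1 = tind p.1 * (h' p.2 * wt p.2) := by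
    intro h' p
    by_cases hp : p.1 = ⊤
    · rw [hp, chk_top_left, tind, if_pos rfl]
      ring
    · rw [tind, if_neg hp]
      ring
  calc ∫⁻ p, h (-(chk p.1 p.2)) * wt (chk p.1 p.2) * tind p.1 ∂(μ1.prod μ2)
      = ∫⁻ p, tind p.1 * ((fun α => h (-α) * wt α) p.2) ∂(μ1.prod μ2) :=
        lintegral_congr fun p => e (fun ζ => h (-ζ)) p
    _ = (∫⁻ β, tind β ∂μ1) * ∫⁻ α, h (-α) * wt α ∂μ2 :=
        lintegral_prod_mul measurable_tind.aemeasurable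
          ((hh.comp measurable_neg_ereal).mul measurable_wt).aemeasurable
    _ = (∫⁻ β, tind β ∂μ1) * ∫⁻ α, h α * wt α ∂μ2 := by rw [symm_lintegral hμ2 hh]
    _ = ∫⁻ p, tind p.1 * ((fun α => h α * wt α) p.2) ∂(μ1.prod μ2) :=
        (lintegral_prod_mul measurable_tind.aemeasurable (hh.mul measurable_wt).aemeasurable).symm
    _ = ∫⁻ p, h (chk p.1 p.2) * wt (chk p.1 p.2) * tind p.1 ∂(μ1.prod μ2) :=
        lintegral_congr fun p => (e h p).symm

lemma atom2 (hμ1 : IsSymmMeasure μ1) {h : EReal → ℝ≥0∞} (hh : Measurable h) :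
    ∫⁻ p, h (-(chk p.1 p.2)) * wt (chk p.1 p.2) * tind p.2 ∂(μ1.prod μ2)
      = ∫⁻ p, h (chk p.1 p.2) * wt (chk p.1 p.2) * tind p.2 ∂(μ1.prod μ2) := by
  have e : ∀ (h' : EReal → ℝ≥0∞) (p : EReal × EReal),
      h' (chk p.1 p.2) * wt (chk p.1 p.2) * tind p.2 = (h' p.1 * wt p.1) * tind p.2 := by
    intro h' p
    by_cases hp : p.2 = ⊤
    · rw [hp, chk_top_right, tind, if_pos rfl]
    · rw [tind, if_neg hp]
      ring
  calc ∫⁻ p, h (-(chk p.1 p.2)) * wt (chk p.1 p.2) * tind p.2 ∂(μ1.prod μ2)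
      = ∫⁻ p, ((fun β => h (-β) * wt β) p.1) * tind p.2 ∂(μ1.prod μ2) :=
        lintegral_congr fun p => e (fun ζ => h (-ζ)) p
    _ = (∫⁻ β, h (-β) * wt β ∂μ1) * ∫⁻ α, tind α ∂μ2 :=
        lintegral_prod_mul ((hh.comp measurable_neg_ereal).mul measurable_wt).aemeasurable
          measurable_tind.aemeasurable
    _ = (∫⁻ β, h β * wt β ∂μ1) * ∫⁻ α, tind α ∂μ2 := by rw [symm_lintegral hμ1 hh]
    _ = ∫⁻ p, ((fun β => h β * wt β) p.1) * tind p.2 ∂(μ1.prod μ2) :=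
        (lintegral_prod_mul (hh.mul measurable_wt).aemeasurable
          measurable_tind.aemeasurable).symm
    _ = ∫⁻ p, h (chk p.1 p.2) * wt (chk p.1 p.2) * tind p.2 ∂(μ1.prod μ2) :=
        lintegral_congr fun p => (e h p).symm

lemma split (hμ1 : IsSymmMeasure μ1) (hμ2 : IsSymmMeasure μ2)
    {h' : EReal → ℝ≥0∞} (hh : Measurable h') :
    ∫⁻ p, h' (chk p.1 p.2) * wt (chk p.1 p.2)
        * (((wt (-p.1) * wt p.1) + (wt (-p.2) * wt p.2)) + (tind p.1 + tind p.2)) ∂(μ1.prod μ2)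
      = 2 * ∫⁻ p, h' (chk p.1 p.2) * wt (chk p.1 p.2) ∂(μ1.prod μ2) := by
  have hae := aeNeBot hμ1 hμ2
  calc ∫⁻ p, h' (chk p.1 p.2) * wt (chk p.1 p.2)
        * (((wt (-p.1) * wt p.1) + (wt (-p.2) * wt p.2)) + (tind p.1 + tind p.2)) ∂(μ1.prod μ2)
      = ∫⁻ p, 2 * (h' (chk p.1 p.2) * wt (chk p.1 p.2)) ∂(μ1.prod μ2) := by
        refine lintegral_congr_ae (hae.mono fun p hp => ?_)
        simp only []
        rw [show ((wt (-p.1) * wt p.1) + (wt (-p.2) * wt p.2)) + (tind p.1 + tind p.2)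
            = ((wt (-p.1) * wt p.1) + tind p.1) + ((wt (-p.2) * wt p.2) + tind p.2) by ring,
          ittOne p.1 hp.1, ittOne p.2 hp.2]
        ring
    _ = 2 * ∫⁻ p, h' (chk p.1 p.2) * wt (chk p.1 p.2) ∂(μ1.prod μ2) :=
        lintegral_const_mul 2 ((hh.comp measurable_chk).mul (measurable_wt.comp measurable_chk))

lemma key_lemma (hμ1 : IsSymmMeasure μ1) (hμ2 : IsSymmMeasure μ2)
    {h : EReal → ℝ≥0∞} (hh : Measurable h) :
    ∫⁻ p, h (-(chk p.1 p.2)) * wt (chk p.1 p.2) ∂(μ1.prod μ2)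
      = ∫⁻ p, h (chk p.1 p.2) * wt (chk p.1 p.2) ∂(μ1.prod μ2) := by
  have hchk := measurable_chk
  have mhn : Measurable (fun ζ : EReal => h (-ζ)) := hh.comp measurable_neg_ereal
  have expand : ∀ (g : EReal → ℝ≥0∞), Measurable g →
      ∫⁻ p, g (chk p.1 p.2) * wt (chk p.1 p.2)
          * (((wt (-p.1) * wt p.1) + (wt (-p.2) * wt p.2)) + (tind p.1 + tind p.2)) ∂(μ1.prod μ2)
        = ∫⁻ p, g (chk p.1 p.2) * wt (chk p.1 p.2)
            * ((wt (-p.1) * wt p.1) + (wt (-p.2) * wt p.2)) ∂(μ1.prod μ2)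
          + (∫⁻ p, g (chk p.1 p.2) * wt (chk p.1 p.2) * tind p.1 ∂(μ1.prod μ2)
            + ∫⁻ p, g (chk p.1 p.2) * wt (chk p.1 p.2) * tind p.2 ∂(μ1.prod μ2)) := by
    intro g hg
    have m0 : Measurable fun p : EReal × EReal => g (chk p.1 p.2) * wt (chk p.1 p.2) :=
      (hg.comp hchk).mul (measurable_wt.comp hchk)
    have mI : Measurable fun p : EReal × EReal =>
        (wt (-p.1) * wt p.1) + (wt (-p.2) * wt p.2) :=
      ((measurable_wt.comp (measurable_neg_ereal.comp measurable_fst)).mul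
        (measurable_wt.comp measurable_fst)).add
        ((measurable_wt.comp (measurable_neg_ereal.comp measurable_snd)).mul
          (measurable_wt.comp measurable_snd))
    calc ∫⁻ p, g (chk p.1 p.2) * wt (chk p.1 p.2)
          * (((wt (-p.1) * wt p.1) + (wt (-p.2) * wt p.2)) + (tind p.1 + tind p.2)) ∂(μ1.prod μ2)
        = ∫⁻ p, g (chk p.1 p.2) * wt (chk p.1 p.2)
              * ((wt (-p.1) * wt p.1) + (wt (-p.2) * wt p.2))
            + (g (chk p.1 p.2) * wt (chk p.1 p.2) * tind p.1
              + g (chk p.1 p.2) * wt (chk p.1 p.2) * tind p.2) ∂(μ1.prod μ2) :=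
          lintegral_congr fun p => by ring
      _ = ∫⁻ p, g (chk p.1 p.2) * wt (chk p.1 p.2)
              * ((wt (-p.1) * wt p.1) + (wt (-p.2) * wt p.2)) ∂(μ1.prod μ2)
          + ∫⁻ p, g (chk p.1 p.2) * wt (chk p.1 p.2) * tind p.1
              + g (chk p.1 p.2) * wt (chk p.1 p.2) * tind p.2 ∂(μ1.prod μ2) :=
          lintegral_add_left (m0.mul mI) _
      _ = _ := by
          rw [lintegral_add_left (f := fun p : EReal × EReal => g (chk p.1 p.2) * wt (chk p.1 p.2) * tind p.1) (m0.mul (show Measurable fun p : EReal × EReal => tind p.1 from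
            measurable_tind.comp measurable_fst)) _]
  have l := split hμ1 hμ2 mhn
  have r := split hμ1 hμ2 hh
  rw [expand _ mhn] at l
  rw [expand _ hh] at r
  have hM := middle hμ1 hμ2 hh
  have hA1 := atom1 (μ1 := μ1) hμ2 hh
  have hA2 := atom2 (μ2 := μ2) hμ1 hh
  have h2 : (2:ℝ≥0∞) * ∫⁻ p, h (-(chk p.1 p.2)) * wt (chk p.1 p.2) ∂(μ1.prod μ2)
      = (2:ℝ≥0∞) * ∫⁻ p, h (chk p.1 p.2) * wt (chk p.1 p.2) ∂(μ1.prod μ2) := by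
    rw [← l, ← r, hM, hA1, hA2]
  exact (ENNReal.mul_right_inj (by norm_num) (by norm_num)).mp h2

theorem isSymmMeasure_mCheck (hμ1 : IsSymmMeasure μ1) (hμ2 : IsSymmMeasure μ2) :
    IsSymmMeasure (mCheck μ1 μ2) := by
  intro E hE
  have hchk := measurable_chk
  have mh : Measurable (E.indicator (1 : EReal → ℝ≥0∞)) := measurable_one.indicator hE
  have hmap : mCheck μ1 μ2 = (μ1.prod μ2).map (fun p : EReal × EReal => chk p.1 p.2) := rfl
  have conv : ∀ (s : Set EReal), MeasurableSet s → ∀ p : EReal × EReal,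
      ((fun q : EReal × EReal => chk q.1 q.2) ⁻¹' s).indicator
          (fun q : EReal × EReal => wt (chk q.1 q.2)) p
        = s.indicator 1 (chk p.1 p.2) * wt (chk p.1 p.2) := by
    intro s _ p
    by_cases hp : chk p.1 p.2 ∈ s
    · rw [Set.indicator_of_mem (by simpa using hp), Set.indicator_of_mem hp]
      simp
    · rw [Set.indicator_of_notMem (by simpa using hp), Set.indicator_of_notMem hp]
      simp
  rw [hmap, setLIntegral_map (measurable_neg_ereal hE) measurable_wt hchk,
    setLIntegral_map hE measurable_wt hchk,
    ← lintegral_indicator (hchk (measurable_neg_ereal hE)) _,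
    ← lintegral_indicator (hchk hE) _]
  calc ∫⁻ p, ((fun q : EReal × EReal => chk q.1 q.2) ⁻¹' ((fun a : EReal => -a) ⁻¹' E)).indicator
          (fun q : EReal × EReal => wt (chk q.1 q.2)) p ∂(μ1.prod μ2)
      = ∫⁻ p, ((fun a : EReal => -a) ⁻¹' E).indicator 1 (chk p.1 p.2)
          * wt (chk p.1 p.2) ∂(μ1.prod μ2) :=
        lintegral_congr (conv _ (measurable_neg_ereal hE))
    _ = ∫⁻ p, E.indicator 1 (-(chk p.1 p.2)) * wt (chk p.1 p.2) ∂(μ1.prod μ2) :=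
        lintegral_congr fun p => by
          by_cases hp : -(chk p.1 p.2) ∈ E
          · rw [Set.indicator_of_mem (show chk p.1 p.2 ∈ (fun a : EReal => -a) ⁻¹' E from hp),
              Set.indicator_of_mem hp]
            simp
          · rw [Set.indicator_of_notMem (show chk p.1 p.2 ∉ (fun a : EReal => -a) ⁻¹' E from hp),
              Set.indicator_of_notMem hp]
    _ = ∫⁻ p, E.indicator 1 (chk p.1 p.2) * wt (chk p.1 p.2) ∂(μ1.prod μ2) :=
        key_lemma hμ1 hμ2 mh
    _ = ∫⁻ p, ((fun q : EReal × EReal => chk q.1 q.2) ⁻¹' E).indicator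
          (fun q : EReal × EReal => wt (chk q.1 q.2)) p ∂(μ1.prod μ2) :=
        (lintegral_congr (conv _ hE)).symm


lemma jordan_toSignedMeasure (μ : Measure EReal) [IsFiniteMeasure μ] :
    (μ.toSignedMeasure).toJordanDecomposition
      = ⟨μ, 0, Measure.MutuallySingular.zero_right⟩ := by
  set J : JordanDecomposition EReal := ⟨μ, 0, Measure.MutuallySingular.zero_right⟩ with hJdef
  have hJ : J.toSignedMeasure = μ.toSignedMeasure := by
    show μ.toSignedMeasure - (0 : Measure EReal).toSignedMeasure = _
    rw [Measure.toSignedMeasure_zero, sub_zero]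
  rw [← hJ, JordanDecomposition.toJordanDecomposition_toSignedMeasure]

lemma jp_toSignedMeasure (μ : Measure EReal) [IsFiniteMeasure μ] :
    jp μ.toSignedMeasure = μ := by
  rw [jp, jordan_toSignedMeasure]

lemma jn_toSignedMeasure (μ : Measure EReal) [IsFiniteMeasure μ] :
    jn μ.toSignedMeasure = 0 := by
  rw [jn, jordan_toSignedMeasure]

lemma isSymmMeasure_zero : IsSymmMeasure (0 : Measure EReal) := by
  intro E hE
  simp [Measure.restrict_zero]

lemma mCheck_zero_left (μ : Measure EReal) : mCheck 0 μ = 0 := by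
  rw [mCheck, Measure.zero_prod, Measure.map_zero]

lemma mCheck_zero_right (μ : Measure EReal) [SFinite μ] : mCheck μ 0 = 0 := by
  rw [mCheck, Measure.prod_zero, Measure.map_zero]


end Aux

/-- If `x1` and `x2` are symmetric probability measures on the
extended reals, then `x1 ⊠ x2` is again a symmetric probability measure. -/
theorem check_mem_X (x1 x2 : SM) (h1 : MemX x1) (h2 : MemX x2) :
    MemX (sCheck x1 x2) := by
  obtain ⟨⟨μ1, hμ1p, hx1⟩, hs1⟩ := h1
  obtain ⟨⟨μ2, hμ2p, hx2⟩, hs2⟩ := h2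
  haveI := hμ1p
  haveI := hμ2p
  have hjp1 : jp x1 = μ1 := by rw [hx1]; exact jp_toSignedMeasure μ1
  have hjp2 : jp x2 = μ2 := by rw [hx2]; exact jp_toSignedMeasure μ2
  have hjn1 : jn x1 = 0 := by rw [hx1]; exact jn_toSignedMeasure μ1
  have hjn2 : jn x2 = 0 := by rw [hx2]; exact jn_toSignedMeasure μ2
  have hsym1 : IsSymmMeasure μ1 := by have := hs1.1; rwa [hjp1] at this
  have hsym2 : IsSymmMeasure μ2 := by have := hs2.1; rwa [hjp2] at this
  have toSM_congr : ∀ {μ ν : Measure EReal} [IsFiniteMeasure μ] [IsFiniteMeasure ν], μ = ν →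
      μ.toSignedMeasure = ν.toSignedMeasure := by
    intro μ ν _ _ h
    subst h
    rfl
  have e11 : mCheck (jp x1) (jp x2) = mCheck μ1 μ2 := by rw [hjp1, hjp2]
  have e12 : mCheck (jp x1) (jn x2) = 0 := by rw [hjn2, mCheck_zero_right]
  have e21 : mCheck (jn x1) (jp x2) = 0 := by rw [hjn1, mCheck_zero_left]
  have e22 : mCheck (jn x1) (jn x2) = 0 := by rw [hjn1, mCheck_zero_left]
  have hze : sCheck x1 x2 = (mCheck μ1 μ2).toSignedMeasure := by
    rw [sCheck, toSM_congr e11, toSM_congr e12, toSM_congr e21, toSM_congr e22,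
      Measure.toSignedMeasure_zero, sub_zero, sub_zero, add_zero]
  haveI hP : IsProbabilityMeasure (mCheck μ1 μ2) := by
    rw [show mCheck μ1 μ2 = (μ1.prod μ2).map (fun p : EReal × EReal => chk p.1 p.2) from rfl]
    exact Measure.isProbabilityMeasure_map measurable_chk.aemeasurable
  refine ⟨⟨mCheck μ1 μ2, hP, ?_⟩, ?_, ?_⟩
  · rw [hze]
  · rw [hze, jp_toSignedMeasure]
    exact isSymmMeasure_mCheck hsym1 hsym2
  · rw [hze, jn_toSignedMeasure]
    exact isSymmMeasure_zero


end SCLDPC
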